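/- Let λ be a regular uncountable cardinal and suppose there is a monadic sentence ψ such that for all ordinals α, α ⊨ ψ iff α = λ. Then λ^(ω+1) (ordinal exponentiation) is the least ordinal satisfying the monadic theory consisting of: 'cf(α) = λ' together with, for each n < ω, 'λⁿ divides α'. That is, any ordinal α satisfying all these properties satisfies α ≥ λ^(ω+1). -/

import Mathlib

/-- Monadic second-order formulas over a linear order with `m` unary predicates,
`k` free element variables and `l` free set variables (de Bruijn indexed). -/
inductive MSO (m : ℕ) : ℕ → ℕ → Type
  | lt {k l : ℕ} (i j : Fin k) : MSO m k l
  | eq {k l : ℕ} (i j : Fin k) : MSO m k l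
  | mem {k l : ℕ} (i : Fin k) (X : Fin l) : MSO m k l
  | pred {k l : ℕ} (p : Fin m) (i : Fin k) : MSO m k l
  | not {k l : ℕ} (φ : MSO m k l) : MSO m k l
  | and {k l : ℕ} (φ ψ : MSO m k l) : MSO m k l
  | exElem {k l : ℕ} (φ : MSO m (k + 1) l) : MSO m k l
  | exSet {k l : ℕ} (φ : MSO m k (l + 1)) : MSO m k l

/-- Satisfaction of an MSO formula in a linear order `α` with unary predicates `P`. -/
def MSO.Sat {m : ℕ} {α : Type*} [LinearOrder α] (P : Fin m → Set α) :
    ∀ {k l : ℕ}, MSO m k l → (Fin k → α) → (Fin l → Set α) → Prop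
  | _, _, .lt i j, e, _ => e i < e j
  | _, _, .eq i j, e, _ => e i = e j
  | _, _, .mem i X, e, s => e i ∈ s X
  | _, _, .pred p i, e, _ => e i ∈ P p
  | _, _, .not φ, e, s => ¬ φ.Sat P e s
  | _, _, .and φ ψ, e, s => φ.Sat P e s ∧ ψ.Sat P e s
  | _, _, .exElem φ, e, s => ∃ a : α, φ.Sat P (Fin.cons a e) s
  | _, _, .exSet φ, e, s => ∃ A : Set α, φ.Sat P e (Fin.cons A s)

/-- Quantifier depth of an MSO formula. -/
def MSO.depth {m : ℕ} : ∀ {k l : ℕ}, MSO m k l → ℕ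
  | _, _, .not φ => φ.depth
  | _, _, .and φ ψ => max φ.depth ψ.depth
  | _, _, .exElem φ => φ.depth + 1
  | _, _, .exSet φ => φ.depth + 1
  | _, _, _ => 0

/-- Satisfaction of an MSO sentence (no free variables). -/
def MSO.SatS {m : ℕ} {α : Type*} [LinearOrder α] (P : Fin m → Set α) (φ : MSO m 0 0) : Prop :=
  φ.Sat P (fun i => i.elim0) (fun i => i.elim0)

/-- (Shelah, Thm 3.5(D).) Let `λ` be a regular uncountable cardinal characterizable by a
monadic sentence. Then `λ^(ω+1)` is the least ordinal of cofinality `λ` divisible by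
every `λⁿ` (`n < ω`). -/
theorem opow_omega0_succ_least_model
    (lam : Cardinal) (hreg : lam.IsRegular) (hunc : Cardinal.aleph0 < lam)
    (hψ : ∃ ψ : MSO 0 0 0, ∀ α : Ordinal,
      MSO.SatS (α := ↥(Set.Iio α)) (fun p => p.elim0) ψ ↔ α = lam.ord) :
    ((lam.ord ^ (Ordinal.omega0 + 1)).cof = lam ∧
      ∀ n : ℕ, (lam.ord ^ (n : Ordinal)) ∣ lam.ord ^ (Ordinal.omega0 + 1)) ∧
    (∀ α : Ordinal, α.cof = lam → (∀ n : ℕ, (lam.ord ^ (n : Ordinal)) ∣ α) →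
      lam.ord ^ (Ordinal.omega0 + 1) ≤ α) := by
  clear hψ
  have hω : Ordinal.omega0 < lam.ord := by
    rw [← Cardinal.ord_aleph0]; exact Cardinal.ord_lt_ord.2 hunc
  have h1 : (1 : Ordinal) < lam.ord := Ordinal.one_lt_omega0.trans hω
  have h0 : (0 : Ordinal) < lam.ord := zero_lt_one.trans h1
  have hlim : Order.IsSuccLimit (lam.ord) := Cardinal.isSuccLimit_ord hreg.aleph0_le
  set W : Ordinal := lam.ord ^ Ordinal.omega0 with hW
  have hWpos : 0 < W := Ordinal.opow_pos _ h0
  have hWlim : Order.IsSuccLimit W := (Ordinal.isNormal_opow h1).map_isSuccLimit Ordinal.isSuccLimit_omega0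
  have hsucc : lam.ord ^ (Ordinal.omega0 + 1) = W * lam.ord := by
    rw [Ordinal.add_one_eq_succ, Ordinal.opow_succ]
  constructor
  · constructor
    · rw [hsucc, Ordinal.cof_map_of_isNormal (Ordinal.isNormal_mul_right hWpos) hlim, hreg.cof_eq]
    · intro n
      exact Ordinal.opow_dvd_opow _
        ((Ordinal.nat_lt_omega0 n).le.trans (le_self_add))
  · intro α hcof hdvd
    have hαne : α ≠ 0 := by
      rintro rfl
      rw [Ordinal.cof_zero] at hcof
      exact (hreg.pos.ne' hcof.symm)
    -- the remainder mod W is zero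
    have hmod : α % W = 0 := by
      by_contra hne
      have hlt : α % W < W := Ordinal.mod_lt _ hWpos.ne'
      obtain ⟨c, hc, hltc⟩ :=
        (Ordinal.lt_opow_of_isSuccLimit h0.ne' Ordinal.isSuccLimit_omega0).1 hlt
      obtain ⟨n, rfl⟩ := Ordinal.lt_omega0.1 hc
      have hdvd1 : lam.ord ^ (n : Ordinal) ∣ W * (α / W) :=
        dvd_mul_of_dvd_left (Ordinal.opow_dvd_opow _ (Ordinal.nat_lt_omega0 n).le) _
      have hdvd2 : lam.ord ^ (n : Ordinal) ∣ α % W := by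
        have := Ordinal.div_add_mod α W
        rw [← this] at hdvd
        exact (Ordinal.dvd_add_iff hdvd1).1 (hdvd n)
      exact absurd (Ordinal.le_of_dvd hne hdvd2) (not_le.2 hltc)
    set β : Ordinal := α / W with hβ
    have hαeq : α = W * β := by
      have := Ordinal.div_add_mod α W
      rw [hmod, add_zero] at this
      exact this.symm
    have hβlim : Order.IsSuccLimit β := by
      rcases Ordinal.zero_or_succ_or_isSuccLimit β with h | ⟨γ, hγ⟩ | h
      · exact absurd (by rw [hαeq, h, mul_zero]) hαne
      · exfalso
        rw [hαeq, ← hγ, Ordinal.mul_succ] at hcof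
        rw [Ordinal.cof_map_of_isNormal (Ordinal.isNormal_add_right (W * γ)) hWlim,
          Ordinal.cof_map_of_isNormal (Ordinal.isNormal_opow h1) Ordinal.isSuccLimit_omega0,
          Ordinal.cof_omega0] at hcof
        exact hunc.ne hcof
      · exact h
    have hcofβ : β.cof = lam := by
      rw [hαeq, Ordinal.cof_map_of_isNormal (Ordinal.isNormal_mul_right hWpos) hβlim] at hcof
      exact hcof
    have hβge : lam.ord ≤ β := by
      calc lam.ord = β.cof.ord := by rw [hcofβ]
        _ ≤ β.card.ord := Cardinal.ord_le_ord.2 (Ordinal.cof_le_card β)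
        _ ≤ β := Cardinal.ord_card_le β
    calc lam.ord ^ (Ordinal.omega0 + 1) = W * lam.ord := hsucc
      _ ≤ W * β := mul_le_mul_right hβge _
      _ = α := hαeq.symm
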